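/- Let θ ∈ (0,1) and define y : 2^[n] → ℝ by y[S] = θ^{|S|}. Then the moment matrix M_n(y), with entries M_n(y)[S,T] = θ^{|S∪T|}, is positive semidefinite. -/

import Mathlib

/-- For `θ ∈ (0,1)`, the moment matrix with entries `θ^{|S ∪ T|}` is positive semidefinite. -/
theorem moment_matrix_theta_posSemidef (n : ℕ) (hn : 0 < n) (θ : ℝ) (hθ0 : 0 < θ) (hθ1 : θ < 1) :
    (Matrix.of (fun S T : Finset (Fin n) => θ ^ (S ∪ T).card)).PosSemidef := by
  set c : ℝ := θ⁻¹ - 1 with hc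
  have hc0 : 0 ≤ c := by
    have : 1 ≤ θ⁻¹ := by
      rw [le_inv_comm₀ one_pos hθ0]
      simpa using hθ1.le
    simp only [hc]
    linarith
  set g : Finset (Fin n) → Finset (Fin n) → ℝ :=
    fun U S => if U ⊆ S then θ ^ S.card else 0 with hg
  have key : ∀ S T : Finset (Fin n),
      θ ^ (S ∪ T).card = ∑ U : Finset (Fin n), c ^ U.card * (g U S * g U T) := by
    intro S T
    have h1 : ∑ U : Finset (Fin n), c ^ U.card * (g U S * g U T)
        = ∑ U ∈ (S ∩ T).powerset, c ^ U.card * (θ ^ S.card * θ ^ T.card) := by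
      rw [← Finset.sum_subset (Finset.subset_univ ((S ∩ T).powerset))]
      · apply Finset.sum_congr rfl
        intro U hU
        rw [Finset.mem_powerset, Finset.subset_inter_iff] at hU
        simp [hg, hU.1, hU.2]
      · intro U _ hU
        rw [Finset.mem_powerset, Finset.subset_inter_iff] at hU
        rcases not_and_or.mp hU with h | h <;> simp [hg, h]
    have h2 : ∑ U ∈ (S ∩ T).powerset, (c : ℝ) ^ U.card = (c + 1) ^ (S ∩ T).card := by
      rw [← Finset.prod_const]
      rw [Finset.prod_add]
      apply Finset.sum_congr rfl
      intro U _
      simp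
    have h3 : c + 1 = θ⁻¹ := by ring
    have hcard : (S ∪ T).card + (S ∩ T).card = S.card + T.card :=
      Finset.card_union_add_card_inter S T
    have h4 : θ ^ (S ∪ T).card * θ ^ (S ∩ T).card = θ ^ S.card * θ ^ T.card := by
      rw [← pow_add, ← pow_add, hcard]
    rw [h1, ← Finset.sum_mul, h2, h3, inv_pow]
    have hne : (θ : ℝ) ^ (S ∩ T).card ≠ 0 := pow_ne_zero _ hθ0.ne'
    field_simp
    linarith [h4]
  refine Matrix.PosSemidef.of_dotProduct_mulVec_nonneg ?_ ?_
  · ext S T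
    simp [Matrix.conjTranspose, Finset.union_comm]
  · intro x
    have hquad : dotProduct (star x) ((Matrix.of fun S T : Finset (Fin n) => θ ^ (S ∪ T).card).mulVec x)
        = ∑ U : Finset (Fin n), c ^ U.card * (∑ S : Finset (Fin n), g U S * x S) ^ 2 := by
      simp only [dotProduct, Matrix.mulVec, Matrix.of_apply, Pi.star_apply, star_trivial]
      calc ∑ S, x S * ∑ T, θ ^ (S ∪ T).card * x T
          = ∑ S, ∑ T, ∑ U, c ^ U.card * (g U S * x S) * (g U T * x T) := by
            apply Finset.sum_congr rfl; intro S _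
            rw [Finset.mul_sum]
            apply Finset.sum_congr rfl; intro T _
            rw [key S T, Finset.sum_mul, Finset.mul_sum]
            apply Finset.sum_congr rfl; intro U _
            ring
        _ = ∑ S, ∑ U, ∑ T, c ^ U.card * (g U S * x S) * (g U T * x T) := by
            exact Finset.sum_congr rfl fun S _ => Finset.sum_comm
        _ = ∑ U, ∑ S, ∑ T, c ^ U.card * (g U S * x S) * (g U T * x T) :=
            Finset.sum_comm
        _ = ∑ U, c ^ U.card * (∑ S, g U S * x S) ^ 2 := by
            apply Finset.sum_congr rfl; intro U _
            rw [sq, Finset.sum_mul]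
            rw [Finset.mul_sum]
            apply Finset.sum_congr rfl; intro S _
            rw [Finset.mul_sum, Finset.mul_sum]
            apply Finset.sum_congr rfl; intro T _
            ring
    rw [hquad]
    apply Finset.sum_nonneg
    intro U _
    exact mul_nonneg (pow_nonneg hc0 _) (sq_nonneg _)
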